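/- Let P be a locally finite partially ordered set with a weak rank function r, and let κ be a P-kernel in the incidence algebra of P with coefficients in the polynomial ring ℤ[t]. Then there exists a unique element f ∈ 𝓘_{1/2}(P) such that \bar f = κ * f; that is, f x x = 1 for all x, for x < y either f x y = 0 or 2·deg(f x y) < r x y, and for all x ≤ y one has t^{r x y}·(f x y)(t^{-1}) = Σ_{x ≤ z ≤ y} (κ x z)·(f z y). (The element f is the right Kazhdan–Lusztig–Stanley function associated with κ.) -/

import Mathlib

open Finset Polynomial

/-- The bar involution on the incidence algebra of `P` over `ℤ[t]` relative to a weak rank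
function `r`: it sends `f` to the function `x y ↦ t^(r x y) · (f x y)(t⁻¹)`, i.e. the
reflection of `f x y` at degree `r x y`. -/
noncomputable def IncidenceAlgebra.bar {P : Type*} [PartialOrder P] [LocallyFiniteOrder P]
    (r : P → P → ℕ) (f : IncidenceAlgebra (Polynomial ℤ) P) :
    IncidenceAlgebra (Polynomial ℤ) P :=
  ⟨fun x y => (f x y).reflect (r x y), fun x y h => by
    show (f x y).reflect (r x y) = 0
    rw [IncidenceAlgebra.apply_eq_zero_of_not_le h, Polynomial.reflect_zero]⟩


section Helpers

/-- The "negative low half" of a polynomial: `-(∑_{2i<n} g_i t^i)`. -/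
noncomputable def lowPart (n : ℕ) (g : ℤ[X]) : ℤ[X] :=
  -(∑ i ∈ Finset.range ((n + 1) / 2), Polynomial.monomial i (g.coeff i))

lemma lowPart_coeff (n : ℕ) (g : ℤ[X]) (j : ℕ) :
    (lowPart n g).coeff j = if 2 * j < n then -(g.coeff j) else 0 := by
  have h2 : 2 * j < n ↔ j < (n + 1) / 2 := by omega
  rw [lowPart, Polynomial.coeff_neg, Polynomial.finset_sum_coeff]
  simp only [Polynomial.coeff_monomial]
  rw [Finset.sum_ite_eq' (Finset.range ((n + 1) / 2)) j (fun i => g.coeff i)]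
  simp only [Finset.mem_range]
  split_ifs with h3 h4 h4
  · rfl
  · omega
  · omega
  · simp

lemma lowPart_deg (n : ℕ) (g : ℤ[X]) (hn : 0 < n) :
    2 * (lowPart n g).natDegree < n := by
  by_cases h : lowPart n g = 0
  · simp [h, hn]
  · by_contra hc
    have hl : (lowPart n g).coeff (lowPart n g).natDegree ≠ 0 :=
      Polynomial.leadingCoeff_ne_zero.mpr h
    rw [lowPart_coeff, if_neg hc] at hl
    exact hl rfl

lemma reflect_sum {ι : Type*} (s : Finset ι) (f : ι → ℤ[X]) (N : ℕ) :
    (∑ i ∈ s, f i).reflect N = ∑ i ∈ s, (f i).reflect N := by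
  induction s using Finset.cons_induction with
  | empty => simp
  | cons a s ha ih => simp [Finset.sum_cons, Polynomial.reflect_add, ih]

lemma reflect_sub (p q : ℤ[X]) (N : ℕ) :
    (p - q).reflect N = p.reflect N - q.reflect N := by
  ext j
  simp [Polynomial.coeff_reflect, Polynomial.coeff_sub]

lemma reflect_lowPart (n : ℕ) (g : ℤ[X]) (hdeg : g.natDegree ≤ n)
    (hanti : g.reflect n = -g) :
    (lowPart n g).reflect n = lowPart n g + g := by
  ext j
  rw [Polynomial.coeff_reflect]
  by_cases hj : j ≤ n
  · rw [Polynomial.revAt_le hj, Polynomial.coeff_add, lowPart_coeff, lowPart_coeff]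
    have hrj := congrArg (fun q : ℤ[X] => q.coeff j) hanti
    simp only [Polynomial.coeff_reflect, Polynomial.revAt_le hj, Polynomial.coeff_neg] at hrj
    split_ifs with h1 h2 h2
    · omega
    · linarith
    · ring
    · have hnn : n - j = j := by omega
      rw [hnn] at hrj
      linarith
  · rw [Polynomial.revAt_eq_self_of_lt (by omega), lowPart_coeff, if_neg (by omega),
      Polynomial.coeff_add, lowPart_coeff, if_neg (by omega),
      Polynomial.coeff_eq_zero_of_natDegree_lt (by omega)]
    simp

lemma eq_zero_of_reflect_eq (n : ℕ) (p : ℤ[X]) (hd : 2 * p.natDegree < n)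
    (h : p.reflect n = p) : p = 0 := by
  by_contra hp
  have hl : p.coeff p.natDegree ≠ 0 := Polynomial.leadingCoeff_ne_zero.mpr hp
  have h1 := congrArg (fun q : ℤ[X] => q.coeff (n - p.natDegree)) h
  simp only [Polynomial.coeff_reflect] at h1
  rw [Polynomial.revAt_le (by omega)] at h1
  have h2 : n - (n - p.natDegree) = p.natDegree := by omega
  rw [h2] at h1
  have h3 : p.coeff (n - p.natDegree) = 0 :=
    Polynomial.coeff_eq_zero_of_natDegree_lt (by omega)
  rw [h3] at h1
  exact hl h1

end Helpers

section KLS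

variable {P : Type*} [PartialOrder P] [LocallyFiniteOrder P] [DecidableEq P]

open scoped Classical in
/-- The KLS function, defined by well-founded recursion on `r x y`. -/
noncomputable def KLS (r : P → P → ℕ)
    (hr_pos : ∀ x y : P, x < y → 0 < r x y)
    (hr_add : ∀ x y z : P, x ≤ y → y ≤ z → r x y + r y z = r x z)
    (κ : IncidenceAlgebra (Polynomial ℤ) P) : P → P → ℤ[X]
  | x, y =>
    if h : x < y then
      lowPart (r x y) (∑ z ∈ (Finset.Ioc x y).attach,
        κ x z * KLS r hr_pos hr_add κ z y)
    else if x = y then 1 else 0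
termination_by x y => r x y
decreasing_by
  rename_i z
  have hz := Finset.mem_Ioc.mp z.2
  have h1 := hr_pos x z hz.1
  have h2 := hr_add x z y hz.1.le hz.2
  omega

end KLS

section KLS2

variable {P : Type*} [PartialOrder P] [LocallyFiniteOrder P] [DecidableEq P]
  (r : P → P → ℕ)
  (hr_pos : ∀ x y : P, x < y → 0 < r x y)
  (hr_add : ∀ x y z : P, x ≤ y → y ≤ z → r x y + r y z = r x z)
  (κ : IncidenceAlgebra (Polynomial ℤ) P)

include hr_add in
lemma r_self_eq_zero (x : P) : r x x = 0 := by
  have := hr_add x x x le_rfl le_rfl; omega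

lemma KLS_diag (x : P) : KLS r hr_pos hr_add κ x x = 1 := by
  rw [KLS]
  simp

lemma KLS_not_le {x y : P} (h : ¬ x ≤ y) : KLS r hr_pos hr_add κ x y = 0 := by
  rw [KLS]
  rw [dif_neg (fun hlt => h hlt.le), if_neg (fun he => h (le_of_eq he))]

lemma KLS_of_lt {x y : P} (h : x < y) :
    KLS r hr_pos hr_add κ x y
      = lowPart (r x y) (∑ z ∈ Finset.Ioc x y, κ x z * KLS r hr_pos hr_add κ z y) := by
  rw [KLS, dif_pos h, Finset.sum_attach (Finset.Ioc x y)
    (fun z => κ x z * KLS r hr_pos hr_add κ z y)]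

lemma KLS_half {x y : P} (h : x < y) :
    2 * (KLS r hr_pos hr_add κ x y).natDegree < r x y := by
  rw [KLS_of_lt r hr_pos hr_add κ h]
  exact lowPart_deg _ _ (hr_pos x y h)

lemma KLS_deg {x y : P} (h : x ≤ y) :
    (KLS r hr_pos hr_add κ x y).natDegree ≤ r x y := by
  rcases eq_or_lt_of_le h with rfl | hlt
  · rw [KLS_diag]; simp
  · have := KLS_half r hr_pos hr_add κ hlt; omega

lemma KLS_spec
    (hκ_deg : ∀ x y : P, x ≤ y → (κ x y).natDegree ≤ r x y)
    (hκ_diag : ∀ x : P, κ x x = 1)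
    (hκ_kernel : IncidenceAlgebra.bar r κ * κ = 1) :
    ∀ (n : ℕ) (x y : P), x ≤ y → r x y ≤ n →
      (KLS r hr_pos hr_add κ x y).reflect (r x y)
        = ∑ z ∈ Finset.Icc x y, κ x z * KLS r hr_pos hr_add κ z y := by
  intro n
  induction n using Nat.strong_induction_on with
  | _ n IH =>
    intro x y hxy hn
    set f := KLS r hr_pos hr_add κ with hf
    rcases eq_or_lt_of_le hxy with rfl | hlt
    · rw [hf, r_self_eq_zero r hr_add, Finset.Icc_self, Finset.sum_singleton,
        KLS_diag, hκ_diag, one_mul, ← Polynomial.C_1, Polynomial.reflect_C]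
      simp
    · have hr1 : 0 < r x y := hr_pos x y hlt
      have hIoc : ∀ z ∈ Finset.Ioc x y, x < z ∧ z ≤ y := fun z hz => Finset.mem_Ioc.mp hz
      have hrlt : ∀ z ∈ Finset.Ioc x y, r z y < r x y := by
        intro z hz
        obtain ⟨h1, h2⟩ := hIoc z hz
        have := hr_pos x z h1
        have := hr_add x z y h1.le h2
        omega
      have hfz_refl : ∀ z ∈ Finset.Ioc x y,
          (f z y).reflect (r z y) = ∑ w ∈ Finset.Icc z y, κ z w * f w y := by
        intro z hz
        exact IH (r z y) (by have := hrlt z hz; omega) z y (hIoc z hz).2 le_rfl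
      set g := ∑ z ∈ Finset.Ioc x y, κ x z * f z y with hg
      have hterm_deg : ∀ z ∈ Finset.Ioc x y, (κ x z * f z y).natDegree ≤ r x y := by
        intro z hz
        obtain ⟨h1, h2⟩ := hIoc z hz
        calc (κ x z * f z y).natDegree ≤ (κ x z).natDegree + (f z y).natDegree :=
              Polynomial.natDegree_mul_le
          _ ≤ r x z + r z y := add_le_add (hκ_deg x z h1.le) (KLS_deg r hr_pos hr_add κ h2)
          _ = r x y := hr_add x z y h1.le h2
      have hg_deg : g.natDegree ≤ r x y :=
        Polynomial.natDegree_sum_le_of_forall_le _ _ hterm_deg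
      -- antisymmetry of g
      have hbar_diag : (IncidenceAlgebra.bar r κ) x x = 1 := by
        show (κ x x).reflect (r x x) = 1
        rw [hκ_diag, r_self_eq_zero r hr_add, ← Polynomial.C_1, Polynomial.reflect_C]
        simp
      have hker : ∀ w ∈ Finset.Ioc x y,
          ∑ z ∈ Finset.Ioc x w, (κ x z).reflect (r x z) * κ z w = -(κ x w) := by
        intro w hw
        obtain ⟨hw1, hw2⟩ := hIoc w hw
        have h1 : (IncidenceAlgebra.bar r κ * κ) x w = 0 := by
          rw [hκ_kernel, IncidenceAlgebra.one_apply, if_neg hw1.ne]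
        rw [IncidenceAlgebra.mul_apply, Finset.Icc_eq_cons_Ioc hw1.le,
          Finset.sum_cons, hbar_diag, one_mul] at h1
        have h2 : ∀ z ∈ Finset.Ioc x w,
            (IncidenceAlgebra.bar r κ) x z * κ z w = (κ x z).reflect (r x z) * κ z w :=
          fun z hz => rfl
        rw [Finset.sum_congr rfl h2] at h1
        exact eq_neg_of_add_eq_zero_right h1
      have hanti : g.reflect (r x y) = -g := by
        rw [hg, reflect_sum]
        have step1 : ∀ z ∈ Finset.Ioc x y,
            (κ x z * f z y).reflect (r x y)
              = ∑ w ∈ Finset.Icc z y, (κ x z).reflect (r x z) * (κ z w * f w y) := by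
          intro z hz
          obtain ⟨h1, h2⟩ := hIoc z hz
          rw [← hr_add x z y h1.le h2,
            Polynomial.reflect_mul _ _ (hκ_deg x z h1.le) (KLS_deg r hr_pos hr_add κ h2),
            hfz_refl z hz, Finset.mul_sum]
        rw [Finset.sum_congr rfl step1]
        have hswap : (∑ z ∈ Finset.Ioc x y, ∑ w ∈ Finset.Icc z y,
              (κ x z).reflect (r x z) * (κ z w * f w y))
            = ∑ w ∈ Finset.Ioc x y, ∑ z ∈ Finset.Ioc x w,
              (κ x z).reflect (r x z) * (κ z w * f w y) := by
          refine Finset.sum_comm' ?_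
          intro z w
          simp only [Finset.mem_Ioc, Finset.mem_Icc]
          constructor
          · rintro ⟨⟨h1, h2⟩, h3, h4⟩
            exact ⟨⟨h1, h3⟩, lt_of_lt_of_le h1 h3, h4⟩
          · rintro ⟨⟨h1, h2⟩, h3, h4⟩
            exact ⟨⟨h1, le_trans h2 h4⟩, h2, h4⟩
        rw [hswap]
        rw [← Finset.sum_neg_distrib]
        refine Finset.sum_congr rfl ?_
        intro w hw
        have : ∑ z ∈ Finset.Ioc x w, (κ x z).reflect (r x z) * (κ z w * f w y)
            = (∑ z ∈ Finset.Ioc x w, (κ x z).reflect (r x z) * κ z w) * f w y := by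
          rw [Finset.sum_mul]
          exact Finset.sum_congr rfl fun z _ => (mul_assoc _ _ _).symm
        rw [this, hker w hw]
        ring
      -- conclude
      have hfxy : f x y = lowPart (r x y) g := KLS_of_lt r hr_pos hr_add κ hlt
      rw [Finset.Icc_eq_cons_Ioc hxy, Finset.sum_cons, hκ_diag, one_mul, ← hg, hfxy]
      exact reflect_lowPart (r x y) g hg_deg hanti

end KLS2

/-- Given a locally finite poset `P` with a weak rank function `r` and a `P`-kernel `κ` in the
incidence algebra of `P` over `ℤ[t]`, there is a unique `f ∈ 𝓘_{1/2}(P)` with `f̄ = κ * f`: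
the right Kazhdan–Lusztig–Stanley function associated with `κ`. -/
theorem existsUnique_right_KLS_function {P : Type*} [PartialOrder P] [LocallyFiniteOrder P]
    [DecidableEq P] (r : P → P → ℕ)
    (hr_pos : ∀ x y : P, x < y → 0 < r x y)
    (hr_add : ∀ x y z : P, x ≤ y → y ≤ z → r x y + r y z = r x z)
    (κ : IncidenceAlgebra (Polynomial ℤ) P)
    (hκ_deg : ∀ x y : P, x ≤ y → (κ x y).natDegree ≤ r x y)
    (hκ_diag : ∀ x : P, κ x x = 1)
    (hκ_kernel : IncidenceAlgebra.bar r κ * κ = 1) :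
    ∃! f : IncidenceAlgebra (Polynomial ℤ) P,
      (∀ x : P, f x x = 1) ∧
      (∀ x y : P, x < y → f x y = 0 ∨ 2 * (f x y).natDegree < r x y) ∧
      ∀ x y : P, x ≤ y →
        (f x y).reflect (r x y) = ∑ z ∈ Finset.Icc x y, κ x z * f z y := by
  set F : IncidenceAlgebra (Polynomial ℤ) P :=
    ⟨KLS r hr_pos hr_add κ, fun x y h => KLS_not_le r hr_pos hr_add κ h⟩ with hF
  have hFapp : ∀ x y : P, F x y = KLS r hr_pos hr_add κ x y := fun x y => rfl
  refine ⟨F, ⟨?_, ?_, ?_⟩, ?_⟩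
  · intro x; rw [hFapp, KLS_diag]
  · intro x y h
    exact Or.inr (by rw [hFapp]; exact KLS_half r hr_pos hr_add κ h)
  · intro x y h
    simp only [hFapp]
    exact KLS_spec r hr_pos hr_add κ hκ_deg hκ_diag hκ_kernel (r x y) x y h le_rfl
  · rintro f' ⟨h1, h2, h3⟩
    have key : ∀ (n : ℕ) (x y : P), x ≤ y → r x y ≤ n →
        f' x y = KLS r hr_pos hr_add κ x y := by
      intro n
      induction n using Nat.strong_induction_on with
      | _ n IH =>
        intro x y hxy hn
        rcases eq_or_lt_of_le hxy with rfl | hlt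
        · rw [h1, KLS_diag]
        · set k := KLS r hr_pos hr_add κ with hk
          have hrefl2 := KLS_spec r hr_pos hr_add κ hκ_deg hκ_diag hκ_kernel
            (r x y) x y hxy le_rfl
          have hrefl1 := h3 x y hxy
          set p := f' x y - k x y with hp
          have hsum : ∀ z ∈ Finset.Ioc x y, f' z y = k z y := by
            intro z hz
            obtain ⟨hz1, hz2⟩ := Finset.mem_Ioc.mp hz
            have ha := hr_pos x z hz1
            have hb := hr_add x z y hz1.le hz2
            exact IH (r z y) (by omega) z y hz2 (by omega)
          have hS : ∑ z ∈ Finset.Ioc x y, κ x z * f' z y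
              = ∑ z ∈ Finset.Ioc x y, κ x z * k z y :=
            Finset.sum_congr rfl fun z hz => by rw [hsum z hz]
          have heq : p.reflect (r x y) = p := by
            rw [hp, reflect_sub, hrefl1, hrefl2, Finset.Icc_eq_cons_Ioc hxy,
              Finset.sum_cons, Finset.sum_cons, hκ_diag, one_mul, one_mul, hS]
            ring
          have hdeg : 2 * p.natDegree < r x y := by
            have hkd : 2 * (k x y).natDegree < r x y := KLS_half r hr_pos hr_add κ hlt
            have hf'd : 2 * (f' x y).natDegree < r x y := by
              rcases h2 x y hlt with h | h
              · rw [h]; simpa using hr_pos x y hlt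
              · exact h
            have hle : p.natDegree ≤ max (f' x y).natDegree ((k x y)).natDegree :=
              Polynomial.natDegree_sub_le _ _
            rcases le_total (f' x y).natDegree ((k x y)).natDegree with h | h
            · rw [max_eq_right h] at hle; omega
            · rw [max_eq_left h] at hle; omega
          have hz := eq_zero_of_reflect_eq (r x y) p hdeg heq
          rw [hp, sub_eq_zero] at hz
          exact hz
    refine IncidenceAlgebra.ext fun x y hxy => ?_
    exact key (r x y) x y hxy le_rfl
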